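/- For two fractions p/q and r/s in lowest terms with qr - ps = 1, the Ford circles C[p/q] and C[r/s] (the circle of radius 1/(2q²) centered at (p/q, 1/(2q²)) and the circle of radius 1/(2s²) centered at (r/s, 1/(2s²))) are externally tangent. -/

import Mathlib

/-- For Farey neighbors `p/q` and `r/s` (in lowest terms, positive denominators,
`q*r - p*s = 1`), the Ford circles `C[p/q]` and `C[r/s]` are externally tangent:
the distance between their centers equals the sum of their radii. Here the plane
is identified with `ℂ`, and the Ford circle `C[p/q]` has center `p/q + i/(2q²)`
and radius `1/(2q²)`. -/
theorem ford_circles_externally_tangent (p q r s : ℤ)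
    (hq : 0 < q) (hs : 0 < s)
    (hpq : Int.gcd p q = 1) (hrs : Int.gcd r s = 1)
    (hdet : q * r - p * s = 1) :
    dist ((p : ℂ) / q + (1 / (2 * (q : ℂ) ^ 2)) * Complex.I)
        ((r : ℂ) / s + (1 / (2 * (s : ℂ) ^ 2)) * Complex.I)
      = 1 / (2 * (q : ℝ) ^ 2) + 1 / (2 * (s : ℝ) ^ 2) := by
  have hq0 : (q : ℝ) ≠ 0 := Int.cast_ne_zero.2 hq.ne'
  have hs0 : (s : ℝ) ≠ 0 := Int.cast_ne_zero.2 hs.ne'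
  have hqc : (q : ℂ) ≠ 0 := Int.cast_ne_zero.2 hq.ne'
  have hsc : (s : ℂ) ≠ 0 := Int.cast_ne_zero.2 hs.ne'
  set a : ℝ := (p : ℝ) / q - (r : ℝ) / s with ha
  set b : ℝ := 1 / (2 * (q : ℝ) ^ 2) - 1 / (2 * (s : ℝ) ^ 2) with hb
  have hza : ((p : ℂ) / q + (1 / (2 * (q : ℂ) ^ 2)) * Complex.I)
      - ((r : ℂ) / s + (1 / (2 * (s : ℂ) ^ 2)) * Complex.I)
      = (a : ℂ) + (b : ℂ) * Complex.I := by
    push_cast [ha, hb]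
    ring
  have hdetR : (q : ℝ) * r - p * s = 1 := by exact_mod_cast congrArg (Int.cast : ℤ → ℝ) hdet
  have haval : a = -1 / (q * s) := by
    rw [ha]; field_simp
    nlinarith [hdetR]
  rw [Complex.dist_eq, hza, Complex.norm_def, Complex.normSq_add_mul_I]
  rw [show Real.sqrt (a ^ 2 + b ^ 2)
      = Real.sqrt ((1 / (2 * (q : ℝ) ^ 2) + 1 / (2 * (s : ℝ) ^ 2)) ^ 2) from by
    congr 1
    rw [haval, hb]
    field_simp
    ring]
  exact Real.sqrt_sq (by positivity)
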